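/- If W ~ N(0,1), S > 0, ρ ∈ (-1,1), and F = sinh(√S·W) + ρ·(cosh(√S·W) − e^{S/2}), then with w = e^S the third central moment is E[F³] = ρ³ w^{3/2}(w−1)²(w+2) + 3ρ(1−ρ²) w^{1/2}((w⁴−1)/4 − (w²−1)/2). -/

import Mathlib

open MeasureTheory ProbabilityTheory
open scoped ENNReal NNReal

lemma pdf_mul_exp_aux (t x : ℝ) :
    Real.exp (t * x) * gaussianPDFReal 0 1 x
      = Real.exp (t^2/2) * gaussianPDFReal t 1 x := by
  simp only [gaussianPDFReal, NNReal.coe_one, mul_one, sub_zero]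
  rw [mul_comm (Real.exp (t*x)), mul_assoc, ← Real.exp_add,
    show -x^2/2 + t*x = t^2/2 + -(x-t)^2/2 from by ring, Real.exp_add]
  ring

lemma integrable_exp_mul_gauss (t : ℝ) :
    Integrable (fun x => Real.exp (t * x)) (gaussianReal 0 1) := by
  rw [gaussianReal_of_var_ne_zero 0 one_ne_zero,
    integrable_withDensity_iff (measurable_gaussianPDF 0 1) (by simp [gaussianPDF])]
  have h : (fun x => Real.exp (t*x) * (gaussianPDF 0 1 x).toReal)
      = fun x => Real.exp (t^2/2) * gaussianPDFReal t 1 x := by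
    funext x
    rw [gaussianPDF, ENNReal.toReal_ofReal (gaussianPDFReal_nonneg 0 1 x), pdf_mul_exp_aux]
  rw [h]
  exact (integrable_gaussianPDFReal t 1).const_mul _

lemma integral_exp_mul_gauss (t : ℝ) :
    ∫ x, Real.exp (t * x) ∂(gaussianReal 0 1) = Real.exp (t^2/2) := by
  rw [gaussianReal_of_var_ne_zero 0 one_ne_zero, gaussianPDF_def]
  have h : (fun x => ENNReal.ofReal (gaussianPDFReal 0 1 x))
      = fun x => ((gaussianPDFReal 0 1 x).toNNReal : ℝ≥0∞) := rfl
  rw [h, integral_withDensity_eq_integral_smul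
    ((measurable_gaussianPDFReal 0 1).real_toNNReal)]
  have h2 : (fun x => (gaussianPDFReal 0 1 x).toNNReal • Real.exp (t*x))
      = fun x => Real.exp (t^2/2) * gaussianPDFReal t 1 x := by
    funext x
    rw [NNReal.smul_def, Real.coe_toNNReal _ (gaussianPDFReal_nonneg 0 1 x),
      smul_eq_mul, mul_comm (gaussianPDFReal 0 1 x) _, pdf_mul_exp_aux]
  rw [h2, integral_const_mul, integral_gaussianPDFReal_eq_one t one_ne_zero, mul_one]

theorem stmt_4 (S ρ : ℝ) (hS : 0 < S) (h1 : -1 < ρ) (h2 : ρ < 1)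
    (F : ℝ → ℝ)
    (hF : F = fun w => Real.sinh (Real.sqrt S * w)
      + ρ * (Real.cosh (Real.sqrt S * w) - Real.exp (S/2)))
    (w : ℝ) (hw : w = Real.exp S) :
    (∫ x, (F x)^3 ∂(gaussianReal 0 1)) =
      ρ^3 * w ^ ((3:ℝ)/2) * (w - 1)^2 * (w + 2)
        + 3 * ρ * (1 - ρ^2) * w ^ ((1:ℝ)/2)
          * ((w^4 - 1) / 4 - (w^2 - 1) / 2) := by
  set a := Real.sqrt S with ha
  have ha2 : a^2 = S := Real.sq_sqrt hS.le
  set q := Real.exp (S/2) with hqdef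
  set A := (1+ρ)/2 with hA
  set B := (ρ-1)/2 with hB
  set C := -(ρ*q) with hC
  -- pointwise form of F
  have hFx : ∀ x, F x = A * Real.exp (a*x) + B * Real.exp (-a*x) + C := by
    intro x
    rw [hF]
    simp only [Real.sinh_eq, Real.cosh_eq, Real.exp_neg, hA, hB, hC, hqdef]
    rw [neg_mul, Real.exp_neg]
    ring
  -- cube expansion
  have hcube : (fun x => (F x)^3)
      = fun x => A^3 * Real.exp ((3*a)*x) + B^3 * Real.exp ((-(3*a))*x)
        + 3*A^2*C * Real.exp ((2*a)*x) + 3*B^2*C * Real.exp ((-(2*a))*x)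
        + (3*A^2*B + 3*A*C^2) * Real.exp (a*x)
        + (3*A*B^2 + 3*B*C^2) * Real.exp ((-a)*x)
        + (6*A*B*C + C^3) := by
    funext x
    rw [hFx x]
    have hu : Real.exp (a*x) ≠ 0 := (Real.exp_pos _).ne'
    have e3 : Real.exp ((3*a)*x) = (Real.exp (a*x))^3 := by
      rw [show (3*a)*x = a*x + a*x + a*x by ring, Real.exp_add, Real.exp_add]; ring
    have e2 : Real.exp ((2*a)*x) = (Real.exp (a*x))^2 := by
      rw [show (2*a)*x = a*x + a*x by ring, Real.exp_add]; ring
    have en : Real.exp (-a*x) = (Real.exp (a*x))⁻¹ := by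
      rw [show -a*x = -(a*x) by ring, Real.exp_neg]
    have en3 : Real.exp ((-(3*a))*x) = ((Real.exp (a*x))⁻¹)^3 := by
      rw [show (-(3*a))*x = -((3*a)*x) by ring, Real.exp_neg, e3, inv_pow]
    have en2 : Real.exp ((-(2*a))*x) = ((Real.exp (a*x))⁻¹)^2 := by
      rw [show (-(2*a))*x = -((2*a)*x) by ring, Real.exp_neg, e2, inv_pow]
    have en' : Real.exp ((-a)*x) = (Real.exp (a*x))⁻¹ := by
      rw [show (-a)*x = -(a*x) by ring, Real.exp_neg]
    rw [e3, en, en3, e2, en2]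
    field_simp
    ring
  -- integrate term by term
  have I1 := (integrable_exp_mul_gauss ((3:ℝ)*a)).const_mul (A^3)
  have I2 := (integrable_exp_mul_gauss (-(3*a))).const_mul (B^3)
  have I3 := (integrable_exp_mul_gauss ((2:ℝ)*a)).const_mul (3*A^2*C)
  have I4 := (integrable_exp_mul_gauss (-(2*a))).const_mul (3*B^2*C)
  have I5 := (integrable_exp_mul_gauss a).const_mul (3*A^2*B + 3*A*C^2)
  have I6 := (integrable_exp_mul_gauss (-a)).const_mul (3*A*B^2 + 3*B*C^2)
  have J2 : Integrable (fun x => A^3 * Real.exp ((3*a)*x) + B^3 * Real.exp ((-(3*a))*x)) (gaussianReal 0 1) := I1.add I2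
  have J3 : Integrable (fun x => A^3 * Real.exp ((3*a)*x) + B^3 * Real.exp ((-(3*a))*x)
    + 3*A^2*C * Real.exp ((2*a)*x)) (gaussianReal 0 1) := J2.add I3
  have J4 : Integrable (fun x => A^3 * Real.exp ((3*a)*x) + B^3 * Real.exp ((-(3*a))*x)
    + 3*A^2*C * Real.exp ((2*a)*x) + 3*B^2*C * Real.exp ((-(2*a))*x)) (gaussianReal 0 1) := J3.add I4
  have J5 : Integrable (fun x => A^3 * Real.exp ((3*a)*x) + B^3 * Real.exp ((-(3*a))*x)
    + 3*A^2*C * Real.exp ((2*a)*x) + 3*B^2*C * Real.exp ((-(2*a))*x)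
    + (3*A^2*B + 3*A*C^2) * Real.exp (a*x)) (gaussianReal 0 1) := J4.add I5
  have J6 : Integrable (fun x => A^3 * Real.exp ((3*a)*x) + B^3 * Real.exp ((-(3*a))*x)
    + 3*A^2*C * Real.exp ((2*a)*x) + 3*B^2*C * Real.exp ((-(2*a))*x)
    + (3*A^2*B + 3*A*C^2) * Real.exp (a*x)
    + (3*A*B^2 + 3*B*C^2) * Real.exp ((-a)*x)) (gaussianReal 0 1) := J5.add I6
  have hint : (∫ x, (F x)^3 ∂(gaussianReal 0 1))
      = A^3 * Real.exp ((3*a)^2/2) + B^3 * Real.exp ((-(3*a))^2/2)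
        + 3*A^2*C * Real.exp ((2*a)^2/2) + 3*B^2*C * Real.exp ((-(2*a))^2/2)
        + (3*A^2*B + 3*A*C^2) * Real.exp (a^2/2)
        + (3*A*B^2 + 3*B*C^2) * Real.exp ((-a)^2/2)
        + (6*A*B*C + C^3) := by
    rw [hcube]
    rw [integral_add J6 (integrable_const _),
      integral_add J5 I6,
      integral_add J4 I5,
      integral_add J3 I4,
      integral_add J2 I3,
      integral_add I1 I2]
    simp only [integral_const_mul, integral_exp_mul_gauss, integral_const, probReal_univ,
      ENNReal.toReal_one, smul_eq_mul, one_mul]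
  rw [hint]
  -- express everything as powers of q
  have hq : ∀ n : ℕ, Real.exp ((n:ℝ) * (S/2)) = q^n := fun n => Real.exp_nat_mul _ n
  have e9 : Real.exp ((3*a)^2/2) = q^9 := by
    rw [show (3*a)^2/2 = ((9:ℕ):ℝ)*(S/2) by rw [← ha2]; push_cast; ring, hq]
  have e9' : Real.exp ((-(3*a))^2/2) = q^9 := by
    rw [show (-(3*a))^2/2 = ((9:ℕ):ℝ)*(S/2) by rw [← ha2]; push_cast; ring, hq]
  have e4 : Real.exp ((2*a)^2/2) = q^4 := by
    rw [show (2*a)^2/2 = ((4:ℕ):ℝ)*(S/2) by rw [← ha2]; push_cast; ring, hq]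
  have e4' : Real.exp ((-(2*a))^2/2) = q^4 := by
    rw [show (-(2*a))^2/2 = ((4:ℕ):ℝ)*(S/2) by rw [← ha2]; push_cast; ring, hq]
  have e1 : Real.exp (a^2/2) = q := by rw [ha2, hqdef]
  have e1' : Real.exp ((-a)^2/2) = q := by
    rw [show ((-a):ℝ)^2 = a^2 from by ring, ha2]
  have hwq : w = q^2 := by
    rw [hw, hqdef, ← Real.exp_nat_mul]
    congr 1; push_cast; ring
  have hw32 : w ^ ((3:ℝ)/2) = q^3 := by
    rw [hw, Real.rpow_def_of_pos (Real.exp_pos S), Real.log_exp, hqdef,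
      ← Real.exp_nat_mul]
    congr 1; push_cast; ring
  have hw12 : w ^ ((1:ℝ)/2) = q := by
    rw [hw, Real.rpow_def_of_pos (Real.exp_pos S), Real.log_exp, hqdef]
    congr 1; ring
  rw [e9, e9', e4, e4', e1, e1', hw32, hw12, hwq, hA, hB, hC]
  ring
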